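/- Let C = (E, ≤) be a linearly ordered set. The graphs G0(C), G1(C), G3(C), G4(C), G_c(C) and G_ab(C) are prime, provided |E| ≥ 3 in the case of G0(C) and |E| ≥ 2 in all the other cases. -/

import Mathlib

set_option autoImplicit false

/-- A set of vertices is autonomous if every vertex outside it is adjacent
either to all of its elements or to none of them. -/
def Autonomous {V : Type*} (G : SimpleGraph V) (A : Set V) : Prop :=
  ∀ v ∉ A, (∀ a ∈ A, G.Adj v a) ∨ (∀ a ∈ A, ¬ G.Adj v a)

/-- A graph is prime if it has more than three vertices and its only
autonomous sets are the trivial ones. -/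
def PrimeGraph {V : Type*} (G : SimpleGraph V) : Prop :=
  3 < Cardinal.mk V ∧
    ∀ A : Set V, Autonomous G A → A = ∅ ∨ (∃ x, A = {x}) ∨ A = Set.univ

/-- The graph `G0(C)` on `E × {0,1}`: `(x,i)` and `(x',i')` adjacent iff
`i ≠ i'` and `x ≠ x'`. -/
def G0C (E : Type*) [LinearOrder E] : SimpleGraph (E ⊕ E) :=
  SimpleGraph.fromRel (fun u v => ∃ x y : E, u = Sum.inl x ∧ v = Sum.inr y ∧ x ≠ y)

/-- The graph `G1(C)`: the only edges join `(x,0)` to `(y,1)` with `x ≤ y`. -/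
def G1C (E : Type*) [LinearOrder E] : SimpleGraph (E ⊕ E) :=
  SimpleGraph.fromRel (fun u v => ∃ x y : E, u = Sum.inl x ∧ v = Sum.inr y ∧ x ≤ y)

/-- The graph `G3(C)`: the perfect matching `{(x,0),(x,1)}` together with an
extra vertex `c` (here `none`) adjacent to every `(x,1)`. -/
def G3C (E : Type*) [LinearOrder E] : SimpleGraph (Option (E ⊕ E)) :=
  SimpleGraph.fromRel (fun u v =>
    (∃ x : E, u = some (Sum.inl x) ∧ v = some (Sum.inr x)) ∨
    (∃ x : E, u = none ∧ v = some (Sum.inr x)))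

/-- The graph `G4(C)`: `(x,i)` and `(x',i')` adjacent iff `i = i' = 0` and
`x ≠ x'`, or `i ≠ i'` and `x = x'`. -/
def G4C (E : Type*) [LinearOrder E] : SimpleGraph (E ⊕ E) :=
  SimpleGraph.fromRel (fun u v =>
    (∃ x y : E, u = Sum.inl x ∧ v = Sum.inl y ∧ x ≠ y) ∨
    (∃ x : E, u = Sum.inl x ∧ v = Sum.inr x))

/-- The graph `K(C)`: `G1(C)` together with all edges between distinct
vertices of `E × {0}`. -/
def KC (E : Type*) [LinearOrder E] : SimpleGraph (E ⊕ E) :=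
  SimpleGraph.fromRel (fun u v =>
    (∃ x y : E, u = Sum.inl x ∧ v = Sum.inr y ∧ x ≤ y) ∨
    (∃ x y : E, u = Sum.inl x ∧ v = Sum.inl y ∧ x ≠ y))

/-- The graph `G_c(C)`: `K(C)` with a new vertex `c` (here `none`) adjacent to
every element of `E × {1}`. -/
def GcC (E : Type*) [LinearOrder E] : SimpleGraph (Option (E ⊕ E)) :=
  SimpleGraph.fromRel (fun u v =>
    (∃ u' v' : E ⊕ E, u = some u' ∧ v = some v' ∧ (KC E).Adj u' v') ∨
    (∃ x : E, u = none ∧ v = some (Sum.inr x)))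

/-- The graph `G_ab(C)`: `K(C)` with two new vertices `a` (here `Sum.inr true`)
and `b` (here `Sum.inr false`), with `a` adjacent to `b` and to every element
of `E × {0}`. -/
def GabC (E : Type*) [LinearOrder E] : SimpleGraph ((E ⊕ E) ⊕ Bool) :=
  SimpleGraph.fromRel (fun u v =>
    (∃ u' v' : E ⊕ E, u = Sum.inl u' ∧ v = Sum.inl v' ∧ (KC E).Adj u' v') ∨
    (u = Sum.inr true ∧ v = Sum.inr false) ∨
    (∃ x : E, u = Sum.inr true ∧ v = Sum.inl (Sum.inl x)))

section Adj
variable {E : Type*} [LinearOrder E]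

@[simp] lemma g0_ll (x y : E) : ¬ (G0C E).Adj (Sum.inl x) (Sum.inl y) := by
  simp [G0C, SimpleGraph.fromRel_adj]
@[simp] lemma g0_rr (x y : E) : ¬ (G0C E).Adj (Sum.inr x) (Sum.inr y) := by
  simp [G0C, SimpleGraph.fromRel_adj]
@[simp] lemma g0_lr (x y : E) : (G0C E).Adj (Sum.inl x) (Sum.inr y) ↔ x ≠ y := by
  simp [G0C, SimpleGraph.fromRel_adj]
@[simp] lemma g0_rl (x y : E) : (G0C E).Adj (Sum.inr x) (Sum.inl y) ↔ y ≠ x := by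
  rw [SimpleGraph.adj_comm]; simp [G0C, SimpleGraph.fromRel_adj]

@[simp] lemma g1_ll (x y : E) : ¬ (G1C E).Adj (Sum.inl x) (Sum.inl y) := by
  simp [G1C, SimpleGraph.fromRel_adj]
@[simp] lemma g1_rr (x y : E) : ¬ (G1C E).Adj (Sum.inr x) (Sum.inr y) := by
  simp [G1C, SimpleGraph.fromRel_adj]
@[simp] lemma g1_lr (x y : E) : (G1C E).Adj (Sum.inl x) (Sum.inr y) ↔ x ≤ y := by
  simp [G1C, SimpleGraph.fromRel_adj]
@[simp] lemma g1_rl (x y : E) : (G1C E).Adj (Sum.inr x) (Sum.inl y) ↔ y ≤ x := by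
  rw [SimpleGraph.adj_comm]; simp [G1C, SimpleGraph.fromRel_adj]

@[simp] lemma g3_nl (x : E) : ¬ (G3C E).Adj none (some (Sum.inl x)) := by
  simp [G3C, SimpleGraph.fromRel_adj]
@[simp] lemma g3_ln (x : E) : ¬ (G3C E).Adj (some (Sum.inl x)) none := by
  rw [SimpleGraph.adj_comm]; simp [G3C, SimpleGraph.fromRel_adj]
@[simp] lemma g3_nr (x : E) : (G3C E).Adj none (some (Sum.inr x)) := by
  simp [G3C, SimpleGraph.fromRel_adj]
@[simp] lemma g3_rn (x : E) : (G3C E).Adj (some (Sum.inr x)) none := by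
  rw [SimpleGraph.adj_comm]; simp [G3C, SimpleGraph.fromRel_adj]
@[simp] lemma g3_ll (x y : E) : ¬ (G3C E).Adj (some (Sum.inl x)) (some (Sum.inl y)) := by
  simp [G3C, SimpleGraph.fromRel_adj]
@[simp] lemma g3_rr (x y : E) : ¬ (G3C E).Adj (some (Sum.inr x)) (some (Sum.inr y)) := by
  simp [G3C, SimpleGraph.fromRel_adj]
@[simp] lemma g3_lr (x y : E) : (G3C E).Adj (some (Sum.inl x)) (some (Sum.inr y)) ↔ x = y := by
  simp [G3C, SimpleGraph.fromRel_adj]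
  exact eq_comm
@[simp] lemma g3_rl (x y : E) : (G3C E).Adj (some (Sum.inr x)) (some (Sum.inl y)) ↔ y = x := by
  rw [SimpleGraph.adj_comm]; simp [G3C, SimpleGraph.fromRel_adj]
  exact eq_comm

@[simp] lemma g4_ll (x y : E) : (G4C E).Adj (Sum.inl x) (Sum.inl y) ↔ x ≠ y := by
  constructor
  · intro h; rcases h with ⟨hne, h | h⟩ <;> simp_all [G4C]
  · intro h; exact ⟨by simp [h], Or.inl (Or.inl ⟨x, y, rfl, rfl, h⟩)⟩
@[simp] lemma g4_lr (x y : E) : (G4C E).Adj (Sum.inl x) (Sum.inr y) ↔ x = y := by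
  simp [G4C, SimpleGraph.fromRel_adj]
  exact eq_comm
@[simp] lemma g4_rl (x y : E) : (G4C E).Adj (Sum.inr x) (Sum.inl y) ↔ y = x := by
  rw [SimpleGraph.adj_comm]; simp [G4C, SimpleGraph.fromRel_adj]
  exact eq_comm
@[simp] lemma g4_rr (x y : E) : ¬ (G4C E).Adj (Sum.inr x) (Sum.inr y) := by
  simp [G4C, SimpleGraph.fromRel_adj]
end Adj
section Adj2
variable {E : Type*} [LinearOrder E]

@[simp] lemma kc_ll (x y : E) : (KC E).Adj (Sum.inl x) (Sum.inl y) ↔ x ≠ y := by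
  constructor
  · intro h; rcases h with ⟨hne, h | h⟩ <;> simp_all [KC]
  · intro h; exact ⟨by simp [h], Or.inl (Or.inr ⟨x, y, rfl, rfl, h⟩)⟩
@[simp] lemma kc_lr (x y : E) : (KC E).Adj (Sum.inl x) (Sum.inr y) ↔ x ≤ y := by
  simp [KC, SimpleGraph.fromRel_adj]
@[simp] lemma kc_rl (x y : E) : (KC E).Adj (Sum.inr x) (Sum.inl y) ↔ y ≤ x := by
  rw [SimpleGraph.adj_comm]; simp [KC, SimpleGraph.fromRel_adj]
@[simp] lemma kc_rr (x y : E) : ¬ (KC E).Adj (Sum.inr x) (Sum.inr y) := by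
  simp [KC, SimpleGraph.fromRel_adj]

@[simp] lemma gc_ss (u v : E ⊕ E) : (GcC E).Adj (some u) (some v) ↔ (KC E).Adj u v := by
  constructor
  · rintro ⟨-, (⟨u', v', h1, h2, h⟩ | ⟨x, h1, -⟩) | (⟨u', v', h1, h2, h⟩ | ⟨x, h1, -⟩)⟩
    · obtain rfl := Option.some_injective _ h1
      obtain rfl := Option.some_injective _ h2
      exact h
    · simp at h1
    · obtain rfl := Option.some_injective _ h1
      obtain rfl := Option.some_injective _ h2
      exact h.symm
    · simp at h1
  · intro h; exact ⟨by simpa using h.ne, Or.inl (Or.inl ⟨u, v, rfl, rfl, h⟩)⟩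
@[simp] lemma gc_nr (x : E) : (GcC E).Adj none (some (Sum.inr x)) := by
  simp [GcC, SimpleGraph.fromRel_adj]
@[simp] lemma gc_rn (x : E) : (GcC E).Adj (some (Sum.inr x)) none := by
  rw [SimpleGraph.adj_comm]; simp
@[simp] lemma gc_nl (x : E) : ¬ (GcC E).Adj none (some (Sum.inl x)) := by
  simp [GcC, SimpleGraph.fromRel_adj]
@[simp] lemma gc_ln (x : E) : ¬ (GcC E).Adj (some (Sum.inl x)) none := by
  rw [SimpleGraph.adj_comm]; simp

@[simp] lemma gab_ss (u v : E ⊕ E) : (GabC E).Adj (Sum.inl u) (Sum.inl v) ↔ (KC E).Adj u v := by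
  constructor
  · rintro ⟨-, (⟨u', v', h1, h2, h⟩ | ⟨h1, -⟩ | ⟨x, h1, -⟩) |
      (⟨u', v', h1, h2, h⟩ | ⟨h1, -⟩ | ⟨x, h1, -⟩)⟩
    · obtain rfl := Sum.inl_injective h1
      obtain rfl := Sum.inl_injective h2
      exact h
    · simp at h1
    · simp at h1
    · obtain rfl := Sum.inl_injective h1
      obtain rfl := Sum.inl_injective h2
      exact h.symm
    · simp at h1
    · simp at h1
  · intro h; exact ⟨by simpa using h.ne, Or.inl (Or.inl ⟨u, v, rfl, rfl, h⟩)⟩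
@[simp] lemma gab_ab : (GabC E).Adj (Sum.inr true) (Sum.inr false) := by
  refine ⟨by simp, Or.inl (Or.inr (Or.inl ⟨rfl, rfl⟩))⟩
@[simp] lemma gab_ba : (GabC E).Adj (Sum.inr false) (Sum.inr true) := gab_ab.symm
@[simp] lemma gab_a0 (x : E) : (GabC E).Adj (Sum.inr true) (Sum.inl (Sum.inl x)) := by
  refine ⟨by simp, Or.inl (Or.inr (Or.inr ⟨x, rfl, rfl⟩))⟩
@[simp] lemma gab_0a (x : E) : (GabC E).Adj (Sum.inl (Sum.inl x)) (Sum.inr true) :=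
  (gab_a0 x).symm
@[simp] lemma gab_a1 (x : E) : ¬ (GabC E).Adj (Sum.inr true) (Sum.inl (Sum.inr x)) := by
  simp [GabC, SimpleGraph.fromRel_adj]
@[simp] lemma gab_1a (x : E) : ¬ (GabC E).Adj (Sum.inl (Sum.inr x)) (Sum.inr true) := by
  rw [SimpleGraph.adj_comm]; simp
@[simp] lemma gab_bs (u : E ⊕ E) : ¬ (GabC E).Adj (Sum.inr false) (Sum.inl u) := by
  simp [GabC, SimpleGraph.fromRel_adj]
@[simp] lemma gab_sb (u : E ⊕ E) : ¬ (GabC E).Adj (Sum.inl u) (Sum.inr false) := by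
  rw [SimpleGraph.adj_comm]; simp
end Adj2

section Gen
variable {V : Type*} {G : SimpleGraph V} {A : Set V}

lemma splitter (hA : Autonomous G A) {u v : V} (hu : u ∈ A) (hv : v ∈ A)
    {w : V} (h1 : G.Adj w u) (h2 : ¬ G.Adj w v) : w ∈ A := by
  by_contra hw
  rcases hA w hw with h | h
  · exact h2 (h v hv)
  · exact h u hu h1

lemma prime_of_pairs (hcard : 3 < Cardinal.mk V)
    (h : ∀ A : Set V, Autonomous G A → ∀ u ∈ A, ∀ v ∈ A, u ≠ v → A = Set.univ) :
    PrimeGraph G := by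
  refine ⟨hcard, fun A hA => ?_⟩
  by_cases hE : A = ∅
  · exact Or.inl hE
  obtain ⟨u, hu⟩ := Set.nonempty_iff_ne_empty.2 hE
  by_cases hs : ∀ v ∈ A, v = u
  · exact Or.inr (Or.inl ⟨u, Set.eq_singleton_iff_unique_mem.2 ⟨hu, hs⟩⟩)
  push_neg at hs
  obtain ⟨v, hv, hvu⟩ := hs
  exact Or.inr (Or.inr (h A hA v hv u hu hvu))
end Gen

section Card
variable {E : Type*}

lemma card_sum_lt (h : (2:Cardinal) ≤ Cardinal.mk E) : 3 < Cardinal.mk (E ⊕ E) := by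
  rw [Cardinal.mk_sum, Cardinal.lift_id]
  calc (3:Cardinal) < 2 + 2 := by norm_num
    _ ≤ _ := add_le_add h h

lemma card_opt_lt (h : (2:Cardinal) ≤ Cardinal.mk E) : 3 < Cardinal.mk (Option (E ⊕ E)) := by
  exact lt_of_lt_of_le (card_sum_lt h) (Cardinal.mk_le_of_injective (Option.some_injective _))

lemma card_ab_lt (h : (2:Cardinal) ≤ Cardinal.mk E) : 3 < Cardinal.mk ((E ⊕ E) ⊕ Bool) := by
  exact lt_of_lt_of_le (card_sum_lt h) (Cardinal.mk_le_of_injective Sum.inl_injective)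
end Card
section Main
variable {E : Type*} [LinearOrder E]

lemma g0_pairs (h3 : ∀ x y : E, ∃ z : E, z ≠ x ∧ z ≠ y) :
    ∀ A : Set (E ⊕ E), Autonomous (G0C E) A →
      ∀ u ∈ A, ∀ v ∈ A, u ≠ v → A = Set.univ := by
  intro A hA u hu v hv huv
  have core : ∀ x : E, Sum.inl x ∈ A → Sum.inr x ∈ A → A = Set.univ := by
    intro x hl hr
    have hil : ∀ z : E, Sum.inl z ∈ A := by
      intro z
      rcases eq_or_ne z x with rfl | hz
      · exact hl
      · exact splitter hA hr hl (by simp [hz]) (by simp)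
    have hir : ∀ z : E, Sum.inr z ∈ A := by
      intro z
      rcases eq_or_ne z x with rfl | hz
      · exact hr
      · exact splitter hA hl hr (by simp [Ne.symm hz]) (by simp)
    apply Set.eq_univ_of_forall
    rintro (z | z)
    exacts [hil z, hir z]
  have hll : ∀ x y : E, x ≠ y → Sum.inl x ∈ A → Sum.inl y ∈ A → A = Set.univ := by
    intro x y hxy hx hy
    have : Sum.inr x ∈ A := splitter hA hy hx (by simp [Ne.symm hxy]) (by simp)
    exact core x hx this
  have hlr : ∀ x y : E, Sum.inl x ∈ A → Sum.inr y ∈ A → A = Set.univ := by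
    intro x y hx hy
    rcases eq_or_ne x y with rfl | hxy
    · exact core x hx hy
    · obtain ⟨z, hzx, hzy⟩ := h3 x y
      have : Sum.inl z ∈ A := splitter hA hy hx (by simp [hzy]) (by simp)
      exact hll x z (Ne.symm hzx) hx this
  have hrr : ∀ x y : E, x ≠ y → Sum.inr x ∈ A → Sum.inr y ∈ A → A = Set.univ := by
    intro x y hxy hx hy
    have : Sum.inl x ∈ A := splitter hA hy hx (by simp [hxy]) (by simp)
    exact core x this hx
  match u, v with
  | Sum.inl x, Sum.inl y => exact hll x y (fun h => huv (by rw [h])) hu hv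
  | Sum.inl x, Sum.inr y => exact hlr x y hu hv
  | Sum.inr x, Sum.inl y => exact hlr y x hv hu
  | Sum.inr x, Sum.inr y => exact hrr x y (fun h => huv (by rw [h])) hu hv

lemma g1_pairs :
    ∀ A : Set (E ⊕ E), Autonomous (G1C E) A →
      ∀ u ∈ A, ∀ v ∈ A, u ≠ v → A = Set.univ := by
  intro A hA u hu v hv huv
  have core : ∀ x y : E, x ≤ y → Sum.inl x ∈ A → Sum.inr y ∈ A → A = Set.univ := by
    intro x y hxy hx hy
    have hl1 : ∀ z : E, z ≤ y → Sum.inl z ∈ A := by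
      intro z hz
      exact splitter hA hy hx (by simp [hz]) (by simp)
    have hr1 : ∀ z : E, x ≤ z → Sum.inr z ∈ A := by
      intro z hz
      exact splitter hA hx hy (by simp [hz]) (by simp)
    have hl : ∀ z : E, Sum.inl z ∈ A := by
      intro z
      rcases le_total z y with h | h
      · exact hl1 z h
      · exact splitter hA (hr1 z (hxy.trans h)) hx (by simp) (by simp)
    have hr : ∀ z : E, Sum.inr z ∈ A := by
      intro z
      rcases le_or_gt x z with h | h
      · exact hr1 z h
      · exact splitter hA (hl z) hx (by simp) (by simp [h.not_ge])
    apply Set.eq_univ_of_forall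
    rintro (z | z)
    exacts [hl z, hr z]
  have hlr : ∀ x y : E, Sum.inl x ∈ A → Sum.inr y ∈ A → A = Set.univ := by
    intro x y hx hy
    rcases le_or_gt x y with h | h
    · exact core x y h hx hy
    · have : Sum.inl y ∈ A := splitter hA hy hx (by simp) (by simp)
      exact core y y le_rfl this hy
  match u, v with
  | Sum.inl x, Sum.inl y =>
    have hxy : x ≠ y := fun h => huv (by rw [h])
    rcases hxy.lt_or_gt with h | h
    · have : Sum.inr x ∈ A := splitter hA hu hv (by simp) (by simp [h.not_ge])
      exact hlr x x hu this
    · have : Sum.inr y ∈ A := splitter hA hv hu (by simp) (by simp [h.not_ge])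
      exact hlr y y hv this
  | Sum.inl x, Sum.inr y => exact hlr x y hu hv
  | Sum.inr x, Sum.inl y => exact hlr y x hv hu
  | Sum.inr x, Sum.inr y =>
    have hxy : x ≠ y := fun h => huv (by rw [h])
    rcases hxy.lt_or_gt with h | h
    · have : Sum.inl y ∈ A := splitter hA hv hu (by simp) (by simp [h.not_ge])
      exact hlr y y this hv
    · have : Sum.inl x ∈ A := splitter hA hu hv (by simp) (by simp [h.not_ge])
      exact hlr x x this hu
lemma g3_pairs (h2 : ∀ x : E, ∃ y : E, y ≠ x) :
    ∀ A : Set (Option (E ⊕ E)), Autonomous (G3C E) A →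
      ∀ u ∈ A, ∀ v ∈ A, u ≠ v → A = Set.univ := by
  intro A hA u hu v hv huv
  have core : ∀ x : E, none ∈ A → some (Sum.inr x) ∈ A → A = Set.univ := by
    intro x hn hx
    have hr : ∀ z : E, some (Sum.inr z) ∈ A := by
      intro z
      exact splitter hA hn hx (by simp) (by simp)
    have hl : ∀ z : E, some (Sum.inl z) ∈ A := by
      intro z
      exact splitter hA (hr z) hn (by simp) (by simp)
    apply Set.eq_univ_of_forall
    rintro (_ | z | z)
    exacts [hn, hl z, hr z]
  have hmatch : ∀ x : E, some (Sum.inl x) ∈ A → some (Sum.inr x) ∈ A → A = Set.univ := by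
    intro x hx hy
    have : (none : Option (E ⊕ E)) ∈ A := splitter hA hy hx (by simp) (by simp)
    exact core x this hy
  have hlr : ∀ x y : E, some (Sum.inl x) ∈ A → some (Sum.inr y) ∈ A → A = Set.univ := by
    intro x y hx hy
    rcases eq_or_ne x y with rfl | hxy
    · exact hmatch x hx hy
    · have : (none : Option (E ⊕ E)) ∈ A := splitter hA hy hx (by simp) (by simp)
      exact core y this hy
  have hnl : ∀ x : E, none ∈ A → some (Sum.inl x) ∈ A → A = Set.univ := by
    intro x hn hx
    obtain ⟨y, hyx⟩ := h2 x
    have : some (Sum.inr y) ∈ A := splitter hA hn hx (by simp) (by simp [Ne.symm hyx])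
    exact core y hn this
  match u, v with
  | none, none => exact absurd rfl huv
  | none, some (Sum.inl y) => exact hnl y hu hv
  | none, some (Sum.inr y) => exact core y hu hv
  | some (Sum.inl x), none => exact hnl x hv hu
  | some (Sum.inr x), none => exact core x hv hu
  | some (Sum.inl x), some (Sum.inl y) =>
    have hxy : x ≠ y := fun h => huv (by rw [h])
    have : some (Sum.inr x) ∈ A := splitter hA hu hv (by simp) (by simp [Ne.symm hxy])
    exact hmatch x hu this
  | some (Sum.inl x), some (Sum.inr y) => exact hlr x y hu hv
  | some (Sum.inr x), some (Sum.inl y) => exact hlr y x hv hu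
  | some (Sum.inr x), some (Sum.inr y) =>
    have hxy : x ≠ y := fun h => huv (by rw [h])
    have : some (Sum.inl x) ∈ A := splitter hA hu hv (by simp) (by simp [hxy])
    exact hmatch x this hu

lemma g4_pairs (h2 : ∀ x : E, ∃ y : E, y ≠ x) :
    ∀ A : Set (E ⊕ E), Autonomous (G4C E) A →
      ∀ u ∈ A, ∀ v ∈ A, u ≠ v → A = Set.univ := by
  intro A hA u hu v hv huv
  have core : ∀ x : E, Sum.inl x ∈ A → Sum.inr x ∈ A → A = Set.univ := by
    intro x hx hrx
    have hl : ∀ z : E, Sum.inl z ∈ A := by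
      intro z
      rcases eq_or_ne z x with rfl | hz
      · exact hx
      · exact splitter hA hx hrx (by simp [hz]) (by simp [hz])
    have hr : ∀ z : E, Sum.inr z ∈ A := by
      intro z
      obtain ⟨w, hwz⟩ := h2 z
      exact splitter hA (hl z) (hl w) (by simp) (by simp [hwz])
    apply Set.eq_univ_of_forall
    rintro (z | z)
    exacts [hl z, hr z]
  have hll : ∀ x y : E, x ≠ y → Sum.inl x ∈ A → Sum.inl y ∈ A → A = Set.univ := by
    intro x y hxy hx hy
    have : Sum.inr x ∈ A := splitter hA hx hy (by simp) (by simp [Ne.symm hxy])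
    exact core x hx this
  have hlr : ∀ x y : E, Sum.inl x ∈ A → Sum.inr y ∈ A → A = Set.univ := by
    intro x y hx hy
    rcases eq_or_ne x y with rfl | hxy
    · exact core x hx hy
    · have : Sum.inr x ∈ A := splitter hA hx hy (by simp) (by simp)
      exact core x hx this
  match u, v with
  | Sum.inl x, Sum.inl y => exact hll x y (fun h => huv (by rw [h])) hu hv
  | Sum.inl x, Sum.inr y => exact hlr x y hu hv
  | Sum.inr x, Sum.inl y => exact hlr y x hv hu
  | Sum.inr x, Sum.inr y =>
    have hxy : x ≠ y := fun h => huv (by rw [h])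
    have : Sum.inl x ∈ A := splitter hA hu hv (by simp) (by simp [hxy])
    exact core x this hu
lemma gc_pairs (h2 : ∀ x : E, ∃ y : E, y ≠ x) :
    ∀ A : Set (Option (E ⊕ E)), Autonomous (GcC E) A →
      ∀ u ∈ A, ∀ v ∈ A, u ≠ v → A = Set.univ := by
  intro A hA u hu v hv huv
  have core : ∀ y : E, none ∈ A → some (Sum.inr y) ∈ A → A = Set.univ := by
    intro y hn hy
    have hily : some (Sum.inl y) ∈ A := splitter hA hy hn (by simp) (by simp)
    have hl : ∀ z : E, some (Sum.inl z) ∈ A := by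
      intro z
      rcases eq_or_ne z y with rfl | hz
      · exact hily
      · exact splitter hA hily hn (by simp [hz]) (by simp)
    have hr : ∀ z : E, some (Sum.inr z) ∈ A := by
      intro z
      exact splitter hA (hl z) hy (by simp) (by simp)
    apply Set.eq_univ_of_forall
    rintro (_ | z | z)
    exacts [hn, hl z, hr z]
  have hmixed : ∀ x y : E, some (Sum.inl x) ∈ A → some (Sum.inr y) ∈ A → A = Set.univ := by
    intro x y hx hy
    have hn : (none : Option (E ⊕ E)) ∈ A := splitter hA hy hx (by simp) (by simp)
    exact core y hn hy
  have hll : ∀ x y : E, x < y → some (Sum.inl x) ∈ A → some (Sum.inl y) ∈ A → A = Set.univ := by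
    intro x y hxy hx hy
    have : some (Sum.inr x) ∈ A := splitter hA hx hy (by simp) (by simp [hxy.not_ge])
    exact hmixed x x hx this
  have hrr : ∀ x y : E, x < y → some (Sum.inr x) ∈ A → some (Sum.inr y) ∈ A → A = Set.univ := by
    intro x y hxy hx hy
    have : some (Sum.inl y) ∈ A := splitter hA hy hx (by simp) (by simp [hxy.not_ge])
    exact hmixed y x this hx
  have hll' : ∀ x y : E, x ≠ y → some (Sum.inl x) ∈ A → some (Sum.inl y) ∈ A → A = Set.univ := by
    intro x y hxy hx hy
    rcases hxy.lt_or_gt with h | h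
    · exact hll x y h hx hy
    · exact hll y x h hy hx
  have hnl : ∀ x : E, none ∈ A → some (Sum.inl x) ∈ A → A = Set.univ := by
    intro x hn hx
    obtain ⟨y, hyx⟩ := h2 x
    have : some (Sum.inl y) ∈ A := splitter hA hx hn (by simp [hyx]) (by simp)
    exact hll' x y (Ne.symm hyx) hx this
  match u, v with
  | none, none => exact absurd rfl huv
  | none, some (Sum.inl y) => exact hnl y hu hv
  | none, some (Sum.inr y) => exact core y hu hv
  | some (Sum.inl x), none => exact hnl x hv hu
  | some (Sum.inr x), none => exact core x hv hu
  | some (Sum.inl x), some (Sum.inl y) => exact hll' x y (fun h => huv (by rw [h])) hu hv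
  | some (Sum.inl x), some (Sum.inr y) => exact hmixed x y hu hv
  | some (Sum.inr x), some (Sum.inl y) => exact hmixed y x hv hu
  | some (Sum.inr x), some (Sum.inr y) =>
    have hxy : x ≠ y := fun h => huv (by rw [h])
    rcases hxy.lt_or_gt with h | h
    · exact hrr x y h hu hv
    · exact hrr y x h hv hu

lemma gab_pairs :
    ∀ A : Set ((E ⊕ E) ⊕ Bool), Autonomous (GabC E) A →
      ∀ u ∈ A, ∀ v ∈ A, u ≠ v → A = Set.univ := by
  intro A hA u hu v hv huv
  have core : Sum.inr true ∈ A → Sum.inr false ∈ A → A = Set.univ := by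
    intro ha hb
    have h0 : ∀ x : E, Sum.inl (Sum.inl x) ∈ A := by
      intro x
      exact splitter hA ha hb (by simp) (by simp)
    have h1 : ∀ x : E, Sum.inl (Sum.inr x) ∈ A := by
      intro x
      exact splitter hA (h0 x) hb (by simp) (by simp)
    apply Set.eq_univ_of_forall
    rintro ((x | x) | b)
    · exact h0 x
    · exact h1 x
    · cases b
      · exact hb
      · exact ha
  have ha1 : ∀ x : E, Sum.inr true ∈ A → Sum.inl (Sum.inr x) ∈ A → A = Set.univ := by
    intro x ha hx
    have : Sum.inr false ∈ A := splitter hA ha hx (by simp) (by simp)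
    exact core ha this
  have ha0 : ∀ x : E, Sum.inr true ∈ A → Sum.inl (Sum.inl x) ∈ A → A = Set.univ := by
    intro x ha hx
    have : Sum.inl (Sum.inr x) ∈ A := splitter hA hx ha (by simp) (by simp)
    exact ha1 x ha this
  have h01 : ∀ x y : E, Sum.inl (Sum.inl x) ∈ A → Sum.inl (Sum.inr y) ∈ A → A = Set.univ := by
    intro x y hx hy
    have ha : Sum.inr true ∈ A := splitter hA hx hy (by simp) (by simp)
    exact ha0 x ha hx
  have h00 : ∀ x y : E, x ≠ y → Sum.inl (Sum.inl x) ∈ A → Sum.inl (Sum.inl y) ∈ A →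
      A = Set.univ := by
    intro x y hxy hx hy
    rcases hxy.lt_or_gt with h | h
    · have : Sum.inl (Sum.inr x) ∈ A := splitter hA hx hy (by simp) (by simp [h.not_ge])
      exact h01 y x hy this
    · have : Sum.inl (Sum.inr y) ∈ A := splitter hA hy hx (by simp) (by simp [h.not_ge])
      exact h01 x y hx this
  have h11 : ∀ x y : E, x ≠ y → Sum.inl (Sum.inr x) ∈ A → Sum.inl (Sum.inr y) ∈ A →
      A = Set.univ := by
    intro x y hxy hx hy
    rcases hxy.lt_or_gt with h | h
    · have : Sum.inl (Sum.inl y) ∈ A := splitter hA hy hx (by simp) (by simp [h.not_ge])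
      exact h01 y x this hx
    · have : Sum.inl (Sum.inl x) ∈ A := splitter hA hx hy (by simp) (by simp [h.not_ge])
      exact h01 x y this hy
  have hb0 : ∀ x : E, Sum.inr false ∈ A → Sum.inl (Sum.inl x) ∈ A → A = Set.univ := by
    intro x hb hx
    have : Sum.inl (Sum.inr x) ∈ A := splitter hA hx hb (by simp) (by simp)
    exact h01 x x hx this
  have hb1 : ∀ x : E, Sum.inr false ∈ A → Sum.inl (Sum.inr x) ∈ A → A = Set.univ := by
    intro x hb hx
    have ha : Sum.inr true ∈ A := splitter hA hb hx (by simp) (by simp)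
    exact ha1 x ha hx
  match u, v with
  | Sum.inl (Sum.inl x), Sum.inl (Sum.inl y) => exact h00 x y (fun h => huv (by rw [h])) hu hv
  | Sum.inl (Sum.inl x), Sum.inl (Sum.inr y) => exact h01 x y hu hv
  | Sum.inl (Sum.inr x), Sum.inl (Sum.inl y) => exact h01 y x hv hu
  | Sum.inl (Sum.inr x), Sum.inl (Sum.inr y) => exact h11 x y (fun h => huv (by rw [h])) hu hv
  | Sum.inl (Sum.inl x), Sum.inr true => exact ha0 x hv hu
  | Sum.inl (Sum.inl x), Sum.inr false => exact hb0 x hv hu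
  | Sum.inl (Sum.inr x), Sum.inr true => exact ha1 x hv hu
  | Sum.inl (Sum.inr x), Sum.inr false => exact hb1 x hv hu
  | Sum.inr true, Sum.inl (Sum.inl y) => exact ha0 y hu hv
  | Sum.inr true, Sum.inl (Sum.inr y) => exact ha1 y hu hv
  | Sum.inr false, Sum.inl (Sum.inl y) => exact hb0 y hu hv
  | Sum.inr false, Sum.inl (Sum.inr y) => exact hb1 y hu hv
  | Sum.inr true, Sum.inr true => exact absurd rfl huv
  | Sum.inr false, Sum.inr false => exact absurd rfl huv
  | Sum.inr true, Sum.inr false => exact core hu hv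
  | Sum.inr false, Sum.inr true => exact core hv hu
end Main

/-- For a linearly ordered set `C := (E, ≤)`, the graphs `G0(C)`, `G1(C)`,
`G3(C)`, `G4(C)`, `G_c(C)` and `G_ab(C)` are prime, provided `|E| ≥ 3` for
`G0(C)` and `|E| ≥ 2` in all the other cases. -/
theorem CGraphs_prime (E : Type*) [LinearOrder E] :
    ((3 : Cardinal) ≤ Cardinal.mk E → PrimeGraph (G0C E)) ∧
    ((2 : Cardinal) ≤ Cardinal.mk E → PrimeGraph (G1C E)) ∧
    ((2 : Cardinal) ≤ Cardinal.mk E → PrimeGraph (G3C E)) ∧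
    ((2 : Cardinal) ≤ Cardinal.mk E → PrimeGraph (G4C E)) ∧
    ((2 : Cardinal) ≤ Cardinal.mk E → PrimeGraph (GcC E)) ∧
    ((2 : Cardinal) ≤ Cardinal.mk E → PrimeGraph (GabC E)) := by
  refine ⟨fun h => ?_, fun h => ?_, fun h => ?_, fun h => ?_, fun h => ?_, fun h => ?_⟩
  · have h2 : (2 : Cardinal) ≤ Cardinal.mk E := le_trans (by norm_num) h
    exact prime_of_pairs (card_sum_lt h2) (g0_pairs (fun x y => Cardinal.three_le h x y))
  · exact prime_of_pairs (card_sum_lt h) g1_pairs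
  · exact prime_of_pairs (card_opt_lt h) (g3_pairs (fun x => (Cardinal.two_le_iff' x).mp h))
  · exact prime_of_pairs (card_sum_lt h) (g4_pairs (fun x => (Cardinal.two_le_iff' x).mp h))
  · exact prime_of_pairs (card_opt_lt h) (gc_pairs (fun x => (Cardinal.two_le_iff' x).mp h))
  · exact prime_of_pairs (card_ab_lt h) gab_pairs
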